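/- Let (Z, F, P_ω) for ω ∈ O be a family of probability measures and let e : Z × T → [0,∞) satisfy: for each θ ∈ T and each ω with f(ω) = θ, E_{P_ω}[e(Z, θ)] ≤ 1, where f : O → T. Let Q be a probability measure on T, R a probability measure on O with pushforward f_*R = Q, and ρ : T → [0,∞] with E_{Θ∼Q}[ρ(Θ)] ≤ 1. Then under the joint distribution where Ω ∼ R and Z | Ω = ω has law P_ω, E[ρ(f(Ω)) · e(Z, f(Ω))] ≤ 1. -/

import Mathlib

open MeasureTheory ENNReal Set

/-- Core computation in Theorem 1 (regularized Ville's inequality, expectation form):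
if `e(·,θ)` is an e-variable for every `ω` with `f ω = θ`, the prior `Q` is the
pushforward of `R` under `f`, and the regularizer satisfies `E_{Θ∼Q}[ρ(Θ)] ≤ 1`, then
under the joint law (`Ω ∼ R`, `Z | Ω = ω ∼ P_ω`) one has
`E[ρ(f(Ω)) · e(Z, f(Ω))] ≤ 1`. -/
theorem regularized_eprocess_expectation_le_one
    {Z O T : Type*} [MeasurableSpace Z] [MeasurableSpace O] [MeasurableSpace T]
    (P : O → Measure Z) (hP : ∀ ω, IsProbabilityMeasure (P ω))
    (f : O → T) (hf : Measurable f)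
    (e : Z → T → ℝ≥0∞) (he_meas : ∀ θ, Measurable (fun z => e z θ))
    (he : ∀ θ : T, ∀ ω : O, f ω = θ → ∫⁻ z, e z θ ∂(P ω) ≤ 1)
    (Q : Measure T) [IsProbabilityMeasure Q]
    (R : Measure O) [IsProbabilityMeasure R] (hmap : R.map f = Q)
    (ρ : T → ℝ≥0∞) (hρm : Measurable ρ)
    (hρ : ∫⁻ θ, ρ θ ∂Q ≤ 1) :
    ∫⁻ ω, ρ (f ω) * ∫⁻ z, e z (f ω) ∂(P ω) ∂ R ≤ 1 := by
  calc ∫⁻ ω, ρ (f ω) * ∫⁻ z, e z (f ω) ∂(P ω) ∂ R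
      ≤ ∫⁻ ω, ρ (f ω) * 1 ∂ R := by
        refine lintegral_mono fun ω => mul_le_mul_right (he (f ω) ω rfl) _
    _ = ∫⁻ θ, ρ θ ∂Q := by
        simp only [mul_one]
        rw [← hmap, lintegral_map hρm hf]
    _ ≤ 1 := hρ
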